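/- Let n be a natural number with n ≥ 1, let κ ∈ ℝ, and let f : ℝ → ℝ be continuous. Let φ : ℝ → ℝ → ℝ be C² on ℝ² and satisfy φ_t(t,z) + κ·φ_zz(t,z) + f(z)·φ_z(t,z) = 0 for all (t,z) ∈ ℝ². Suppose u : ℝ → ℝ → ℝ is C² on ℝ × (0,∞), u_r(t,r) ≠ 0 for all t ∈ ℝ and r > 0, and u satisfies the radial equation u_t(t,r) = κ·(u_rr(t,r) − ((n−1)/r)·u_r(t,r))/u_r(t,r)² + f(u(t,r)) for all t ∈ ℝ and r > 0 (the radial nonlinear diffusion–reaction equation in n dimensions with gradient diffusivity g(|u_r|) = −κ/u_r²). Define T(t,r) = r^(n−1)·φ(t, u(t,r)) and X(t,r) = κ·r^(n−1)·φ_z(t, u(t,r))/u_r(t,r). Then ∂T/∂t(t,r) + ∂X/∂r(t,r) = 0 for all t ∈ ℝ and r > 0. -/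

import Mathlib

noncomputable section

/-- Partial derivative in the first (time) variable. -/
def partial_t (u : ℝ → ℝ → ℝ) (t r : ℝ) : ℝ := deriv (fun s => u s r) t

/-- Partial derivative in the second (space) variable. -/
def partial_r (u : ℝ → ℝ → ℝ) (t r : ℝ) : ℝ := deriv (fun s => u t s) r

/-- Second partial derivative in the second (space) variable. -/
def partial_rr (u : ℝ → ℝ → ℝ) (t r : ℝ) : ℝ := deriv (deriv (fun s => u t s)) r

/-- Mixed partial derivative: first in space, then in time. -/
def partial_tr (u : ℝ → ℝ → ℝ) (t r : ℝ) : ℝ := deriv (fun s => deriv (fun y => u s y) r) t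

/-- `u` is C² on ℝ × (0,∞): `u`, `u_t`, `u_r`, `u_rr` and the mixed partial `u_tr`
exist and are continuous there. -/
def IsC2On (u : ℝ → ℝ → ℝ) : Prop :=
  (∀ t r : ℝ, 0 < r → DifferentiableAt ℝ (fun s => u s r) t) ∧
  (∀ t r : ℝ, 0 < r → DifferentiableAt ℝ (fun s => u t s) r) ∧
  (∀ t r : ℝ, 0 < r → DifferentiableAt ℝ (deriv (fun s => u t s)) r) ∧
  (∀ t r : ℝ, 0 < r → DifferentiableAt ℝ (fun s => deriv (fun y => u s y) r) t) ∧
  ContinuousOn (fun q : ℝ × ℝ => u q.1 q.2) {q : ℝ × ℝ | 0 < q.2} ∧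
  ContinuousOn (fun q : ℝ × ℝ => partial_t u q.1 q.2) {q : ℝ × ℝ | 0 < q.2} ∧
  ContinuousOn (fun q : ℝ × ℝ => partial_r u q.1 q.2) {q : ℝ × ℝ | 0 < q.2} ∧
  ContinuousOn (fun q : ℝ × ℝ => partial_rr u q.1 q.2) {q : ℝ × ℝ | 0 < q.2} ∧
  ContinuousOn (fun q : ℝ × ℝ => partial_tr u q.1 q.2) {q : ℝ × ℝ | 0 < q.2}

/-- Infinite family of conservation laws of the radial nonlinear diffusion-reaction
equation in `n` dimensions with gradient diffusivity `g(|u_r|) = -κ/u_r²`. -/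
theorem radial_conservation_law_phi_family (n : ℕ) (hn : 1 ≤ n) (κ : ℝ)
    (f : ℝ → ℝ) (hf : Continuous f)
    (φ : ℝ → ℝ → ℝ) (hφ : ContDiff ℝ 2 (Function.uncurry φ))
    (hlin : ∀ t z : ℝ, partial_t φ t z + κ * partial_rr φ t z + f z * partial_r φ t z = 0)
    (u : ℝ → ℝ → ℝ) (hu : IsC2On u)
    (hur : ∀ t r : ℝ, 0 < r → partial_r u t r ≠ 0)
    (hpde : ∀ t r : ℝ, 0 < r →
      partial_t u t r
        = κ * (partial_rr u t r - (((n : ℝ) - 1) / r) * partial_r u t r)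
            / (partial_r u t r) ^ 2 + f (u t r))
    (T X : ℝ → ℝ → ℝ)
    (hT : ∀ t r : ℝ, T t r = r ^ (n - 1) * φ t (u t r))
    (hX : ∀ t r : ℝ, X t r = κ * r ^ (n - 1) * partial_r φ t (u t r) / partial_r u t r) :
    ∀ t r : ℝ, 0 < r → partial_t T t r + partial_r X t r = 0 := by
  obtain ⟨hu1, hu2, hu3, -⟩ := hu
  intro t r hr
  set F : ℝ × ℝ → ℝ := Function.uncurry φ with hFdef
  have hFd : Differentiable ℝ F := hφ.differentiable (by norm_num)
  set Fz : ℝ × ℝ → ℝ := fun p => fderiv ℝ F p ((0:ℝ),(1:ℝ)) with hFzdef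
  have hFz1 : ContDiff ℝ 1 Fz := (hφ.fderiv_right (m := 1) le_rfl).clm_apply contDiff_const
  have hFzd : Differentiable ℝ Fz := hFz1.differentiable (by norm_num)
  -- identification of partials of φ
  have hpt : ∀ w z : ℝ, partial_t φ w z = fderiv ℝ F (w, z) (1, 0) := fun w z =>
    ((hFd (w,z)).hasFDerivAt.comp_hasDerivAt (l := F) (f := fun s : ℝ => (s, z)) w
      ((hasDerivAt_id w).prodMk (hasDerivAt_const w z))).deriv
  have hpz : ∀ w z : ℝ, partial_r φ w z = Fz (w, z) := fun w z =>
    ((hFd (w,z)).hasFDerivAt.comp_hasDerivAt (l := F) (f := fun s : ℝ => (w, s)) z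
      ((hasDerivAt_const z w).prodMk (hasDerivAt_id z))).deriv
  have hprr : ∀ w z : ℝ, partial_rr φ w z = fderiv ℝ Fz (w, z) (0, 1) := by
    intro w z
    have h1 : deriv (fun s => φ w s) = fun s => Fz (w, s) := by
      funext s; exact hpz w s
    have h2 : deriv (fun s => Fz (w, s)) z = fderiv ℝ Fz (w, z) (0, 1) :=
      ((hFzd (w,z)).hasFDerivAt.comp_hasDerivAt (l := Fz) (f := fun s : ℝ => (w, s)) z
        ((hasDerivAt_const z w).prodMk (hasDerivAt_id z))).deriv
    show deriv (deriv (fun s => φ w s)) z = _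
    rw [h1, h2]
  have lin1 : ∀ (L : ℝ × ℝ →L[ℝ] ℝ) (x y : ℝ), L (x, y) = x * L (1,0) + y * L (0,1) := by
    intro L x y
    have h : ((x, y) : ℝ × ℝ) = x • ((1:ℝ),(0:ℝ)) + y • ((0:ℝ),(1:ℝ)) := by
      simp [Prod.ext_iff]
    rw [h, map_add, map_smul, map_smul, smul_eq_mul, smul_eq_mul]
  -- abbreviations
  set y := u t r with hy
  set ur := partial_r u t r with hur'
  set urr := partial_rr u t r with hurr'
  set ut := partial_t u t r with hut'
  set a := fderiv ℝ F (t, y) (1, 0) with ha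
  set b := Fz (t, y) with hb
  set c := fderiv ℝ Fz (t, y) (0, 1) with hc
  -- T time derivative
  have hcurve : HasDerivAt (fun s : ℝ => (s, u s r)) ((1:ℝ), ut) t :=
    (hasDerivAt_id t).prodMk (hu1 t r hr).hasDerivAt
  have hTt : partial_t T t r = r ^ (n-1) * (a + ut * b) := by
    have h1 : HasDerivAt (fun s => φ s (u s r)) (fderiv ℝ F (t, y) (1, ut)) t :=
      (hFd (t, y)).hasFDerivAt.comp_hasDerivAt (l := F) (f := fun s : ℝ => (s, u s r)) t hcurve
    have h2 : HasDerivAt (fun s => T s r) (r ^ (n-1) * fderiv ℝ F (t, y) (1, ut)) t := by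
      have := h1.const_mul (r ^ (n-1))
      simpa [hT] using this
    rw [show partial_t T t r = deriv (fun s => T s r) t from rfl, h2.deriv, lin1]
    simp only [ha, hb, hFzdef]; ring
  -- X space derivative
  have h1 : HasDerivAt (fun s : ℝ => κ * s ^ (n-1)) (κ * (((n-1:ℕ):ℝ) * r ^ (n-1-1))) r :=
    (hasDerivAt_pow (n-1) r).const_mul κ
  have h2 : HasDerivAt (fun s => Fz (t, u t s)) (fderiv ℝ Fz (t, y) (0, ur)) r :=
    (hFzd (t, y)).hasFDerivAt.comp_hasDerivAt (l := Fz) (f := fun s : ℝ => (t, u t s)) r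
      ((hasDerivAt_const r t).prodMk (hu2 t r hr).hasDerivAt)
  have h3 : HasDerivAt (fun s => partial_r u t s) urr r := (hu3 t r hr).hasDerivAt
  have hfz2 : fderiv ℝ Fz (t, y) (0, ur) = ur * c := by
    rw [lin1]; simp [hc]
  have hXr : partial_r X t r =
      ((κ * (((n-1:ℕ):ℝ) * r ^ (n-1-1)) * b + κ * r ^ (n-1) * (ur * c)) * ur
        - κ * r ^ (n-1) * b * urr) / ur ^ 2 := by
    have hXe : (fun s => X t s) = fun s => (κ * s ^ (n-1) * Fz (t, u t s)) / partial_r u t s := by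
      funext s; rw [hX, hpz]
    have hd : HasDerivAt (fun s => κ * s ^ (n-1) * Fz (t, u t s))
        (κ * (((n-1:ℕ):ℝ) * r ^ (n-1-1)) * b + κ * r ^ (n-1) * (ur * c)) r := by
      have := h1.mul h2
      rw [hfz2] at this
      exact this
    have := (hd.fun_div h3 (hur t r hr))
    rw [show partial_r X t r = deriv (fun s => X t s) r from rfl, hXe, this.deriv]
  -- the key pow identity
  have hD : (((n-1:ℕ)):ℝ) * r ^ (n-1-1) = (((n:ℝ)-1)/r) * r ^ (n-1) := by
    rcases Nat.exists_eq_add_of_le hn with ⟨m, hm⟩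
    subst hm
    cases m with
    | zero => simp
    | succ k =>
      simp only [Nat.add_sub_cancel_left, Nat.succ_sub_one]
      push_cast
      field_simp
      ring
  -- linear PDE at (t, y)
  have hlin' : a + κ * c + f y * b = 0 := by
    have := hlin t y
    rwa [hpt, hpz, hprr, ← ha, ← hb, ← hc] at this
  have hane : a = -(κ * c) - f y * b := by linarith
  have hute := hpde t r hr
  rw [← hut', ← hy, ← hur', ← hurr'] at hute
  rw [hTt, hXr, hD, hane, hute]
  have hu0 := hur t r hr
  rw [← hur'] at hu0
  field_simp
  ring
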